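/- Let J : ℝ^N → ℝ be C² and let μ̂(t) be dither signals with zero mean and covariance average (1/2)I_N over period T (distinct rational frequencies as above). Then for each i, (1/(ℓT)) ∫₀^{ℓT} μ̂ᵢ(s) J(û + A μ̂(s)) ds = (aᵢ/2) ∂J/∂uᵢ(û) + O(a²), where A = diag(a₁,…,a_N) and a = max aᵢ, with the error term uniform on compact sets of û. -/

import Mathlib

open MeasureTheory intervalIntegral

theorem dithered_cost_averaging
    (N : ℕ) (J : EuclideanSpace ℝ (Fin N) → ℝ) (hJ : ContDiff ℝ 2 J)
    (μ : Fin N → ℝ → ℝ) (T : ℝ) (hT : 0 < T)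
    (hcont : ∀ i, Continuous (μ i))
    (hbd : ∀ i t, |μ i t| ≤ 1)
    (hmean : ∀ (i : Fin N) (ℓ : ℕ), 0 < ℓ →
      (∫ t in (0 : ℝ)..((ℓ : ℝ) * T), μ i t) = 0)
    (hcov : ∀ (i j : Fin N) (ℓ : ℕ), 0 < ℓ →
      (∫ t in (0 : ℝ)..((ℓ : ℝ) * T), μ i t * μ j t)
        = if i = j then (ℓ : ℝ) * T / 2 else 0) :
    ∀ K : Set (EuclideanSpace ℝ (Fin N)), IsCompact K →
      ∃ C > (0 : ℝ), ∀ (a : Fin N → ℝ) (abar : ℝ), 0 < abar → abar ≤ 1 →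
        (∀ i, 0 < a i ∧ a i ≤ abar) →
        ∀ uhat ∈ K, ∀ (i : Fin N) (ℓ : ℕ), 0 < ℓ →
          |(1 / ((ℓ : ℝ) * T)) *
              (∫ s in (0 : ℝ)..((ℓ : ℝ) * T),
                μ i s * J (uhat + ∑ j, (a j * μ j s) • EuclideanSpace.single j (1 : ℝ)))
            - (a i / 2) * fderiv ℝ J uhat (EuclideanSpace.single i (1 : ℝ))|
          ≤ C * abar ^ 2 := by
  intro K hK
  -- radius of K
  obtain ⟨R, hR⟩ := hK.isBounded.subset_closedBall 0
  set K' : Set (EuclideanSpace ℝ (Fin N)) := Metric.closedBall 0 (R + N + 1) with hK'def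
  have hK'conv : Convex ℝ K' := convex_closedBall _ _
  have hK'cpt : IsCompact K' := isCompact_closedBall _ _
  -- fderiv J is C¹; its derivative is continuous
  have hfd : ContDiff ℝ 1 (fderiv ℝ J) := hJ.fderiv_right (by norm_num)
  have hDJdiff : Differentiable ℝ J := hJ.differentiable (by norm_num)
  have hD2cont : Continuous (fderiv ℝ (fderiv ℝ J)) := hfd.continuous_fderiv (by norm_num)
  obtain ⟨M0, hM0⟩ := hK'cpt.exists_bound_of_continuousOn (f := fderiv ℝ (fderiv ℝ J)) (by exact hD2cont.continuousOn)
  set M : ℝ := max M0 0 with hMdef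
  have hMnn : 0 ≤ M := le_max_right _ _
  have hM : ∀ x ∈ K', ‖fderiv ℝ (fderiv ℝ J) x‖ ≤ M := fun x hx =>
    (hM0 x hx).trans (le_max_left _ _)
  -- Lipschitz bound for fderiv J on K'
  have hLip : ∀ x ∈ K', ∀ y ∈ K', ‖fderiv ℝ J y - fderiv ℝ J x‖ ≤ M * ‖y - x‖ := by
    intro x hx y hy
    exact hK'conv.norm_image_sub_le_of_norm_fderiv_le
      (fun z _ => (hfd.differentiable one_ne_zero) z) hM hx hy
  refine ⟨M * N ^ 2 + 1, by positivity, ?_⟩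
  intro a abar habar habar1 ha uhat huK i ℓ hℓ
  set L : ℝ := (ℓ : ℝ) * T with hLdef
  have hL : 0 < L := by
    have : (0:ℝ) < (ℓ:ℝ) := by exact_mod_cast hℓ
    positivity
  -- the dither direction
  set v : ℝ → EuclideanSpace ℝ (Fin N) :=
    fun s => ∑ j, (a j * μ j s) • EuclideanSpace.single j (1 : ℝ) with hvdef
  have hvcont : Continuous v := by
    apply continuous_finset_sum
    intro j _
    exact ((continuous_const.mul (hcont j)).smul continuous_const)
  have hvnorm : ∀ s, ‖v s‖ ≤ N * abar := by
    intro s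
    calc ‖v s‖ ≤ ∑ j, ‖(a j * μ j s) • EuclideanSpace.single j (1 : ℝ)‖ :=
          norm_sum_le _ _
      _ ≤ ∑ _j : Fin N, abar := by
          apply Finset.sum_le_sum
          intro j _
          rw [norm_smul, EuclideanSpace.norm_single, norm_one, mul_one,
            Real.norm_eq_abs, abs_mul]
          calc |a j| * |μ j s| ≤ abar * 1 := by
                apply mul_le_mul _ (hbd j s) (abs_nonneg _) habar.le
                rw [abs_of_pos (ha j).1]; exact (ha j).2
            _ = abar := mul_one _
      _ = N * abar := by simp [mul_comm]
  have huhatK' : ∀ (w : EuclideanSpace ℝ (Fin N)), ‖w‖ ≤ N * abar → uhat + w ∈ K' := by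
    intro w hw
    have h1 : ‖uhat‖ ≤ R := by
      have := hR huK; simpa [Metric.mem_closedBall, dist_zero_right] using this
    have h2 : (N:ℝ) * abar ≤ N := by
      calc (N:ℝ) * abar ≤ N * 1 := by
            apply mul_le_mul_of_nonneg_left habar1 (Nat.cast_nonneg _)
        _ = N := mul_one _
    simp only [hK'def, Metric.mem_closedBall, dist_zero_right]
    calc ‖uhat + w‖ ≤ ‖uhat‖ + ‖w‖ := norm_add_le _ _
      _ ≤ R + N * abar := add_le_add h1 hw
      _ ≤ R + N + 1 := by linarith
  -- Taylor bound
  set φ : EuclideanSpace ℝ (Fin N) →L[ℝ] ℝ := fderiv ℝ J uhat with hφdef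
  have hTaylor : ∀ (w : EuclideanSpace ℝ (Fin N)), ‖w‖ ≤ N * abar →
      |J (uhat + w) - J uhat - φ w| ≤ M * (N * abar) ^ 2 := by
    intro w hw
    have hseg : segment ℝ uhat (uhat + w) ⊆ K' := by
      intro x hx
      rw [segment_eq_image'] at hx
      obtain ⟨t, ⟨ht0, ht1⟩, rfl⟩ := hx
      have hww : uhat + w - uhat = w := by abel
      have : ‖t • (uhat + w - uhat)‖ ≤ N * abar := by
        rw [hww, norm_smul, Real.norm_eq_abs, abs_of_nonneg ht0]
        calc t * ‖w‖ ≤ 1 * (N * abar) := by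
              apply mul_le_mul ht1 hw (norm_nonneg _) zero_le_one
          _ = N * abar := one_mul _
      exact huhatK' _ this
    have hsegconv : Convex ℝ (segment ℝ uhat (uhat + w)) := convex_segment _ _
    have key : ‖J (uhat + w) - J uhat - φ ((uhat + w) - uhat)‖
        ≤ (M * (N * abar)) * ‖(uhat + w) - uhat‖ := by
      apply hsegconv.norm_image_sub_le_of_norm_fderiv_le'
        (fun x _ => hDJdiff x) ?_ (left_mem_segment _ _ _) (right_mem_segment _ _ _)
      intro x hx
      have hxK' : x ∈ K' := hseg hx
      have huK' : uhat ∈ K' := by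
        have := huhatK' 0 (by simp; positivity)
        simpa using this
      calc ‖fderiv ℝ J x - φ‖ ≤ M * ‖x - uhat‖ := hLip uhat huK' x hxK'
        _ ≤ M * (N * abar) := by
            apply mul_le_mul_of_nonneg_left _ hMnn
            rw [segment_eq_image'] at hx
            obtain ⟨t, ⟨ht0, ht1⟩, rfl⟩ := hx
            have hx2 : (fun θ : ℝ => uhat + θ • (uhat + w - uhat)) t - uhat = t • w := by
              show uhat + t • (uhat + w - uhat) - uhat = t • w
              rw [add_sub_cancel_left, add_sub_cancel_left]
            rw [hx2, norm_smul, Real.norm_eq_abs, abs_of_nonneg ht0]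
            calc t * ‖w‖ ≤ 1 * (N * abar) := by
                  apply mul_le_mul ht1 hw (norm_nonneg _) zero_le_one
              _ = N * abar := one_mul _
    rw [add_sub_cancel_left] at key
    calc |J (uhat + w) - J uhat - φ w| ≤ (M * (N * abar)) * ‖w‖ := key
      _ ≤ (M * (N * abar)) * (N * abar) := by
          apply mul_le_mul_of_nonneg_left hw; positivity
      _ = M * (N * abar) ^ 2 := by ring
  -- continuity / integrability facts
  have hJc : Continuous J := hJ.continuous
  have hg : Continuous (fun s => J (uhat + v s)) := hJc.comp (continuous_const.add hvcont)
  have hRc : Continuous (fun s => J (uhat + v s) - J uhat - φ (v s)) :=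
    (hg.sub continuous_const).sub (φ.continuous.comp hvcont)
  -- integral decomposition
  have hint1 : IntervalIntegrable (fun s => μ i s * J uhat) volume 0 L :=
    ((hcont i).mul continuous_const).intervalIntegrable _ _
  have hint2 : IntervalIntegrable (fun s => μ i s * φ (v s)) volume 0 L :=
    ((hcont i).mul (φ.continuous.comp hvcont)).intervalIntegrable _ _
  have hint3 : IntervalIntegrable
      (fun s => μ i s * (J (uhat + v s) - J uhat - φ (v s))) volume 0 L :=
    ((hcont i).mul hRc).intervalIntegrable _ _
  have hsplit : (∫ s in (0:ℝ)..L, μ i s * J (uhat + v s))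
      = (∫ s in (0:ℝ)..L, μ i s * J uhat)
        + (∫ s in (0:ℝ)..L, μ i s * φ (v s))
        + (∫ s in (0:ℝ)..L, μ i s * (J (uhat + v s) - J uhat - φ (v s))) := by
    rw [← intervalIntegral.integral_add hint1 hint2,
      ← intervalIntegral.integral_add (hint1.add hint2) hint3]
    congr 1
    funext s
    ring
  have hI1 : (∫ s in (0:ℝ)..L, μ i s * J uhat) = 0 := by
    rw [intervalIntegral.integral_mul_const, hmean i ℓ hℓ, zero_mul]
  have hI2 : (∫ s in (0:ℝ)..L, μ i s * φ (v s))
      = (L / 2) * (a i * φ (EuclideanSpace.single i (1:ℝ))) := by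
    have heq : ∀ s, μ i s * φ (v s)
        = ∑ j, (μ i s * μ j s) * (a j * φ (EuclideanSpace.single j (1:ℝ))) := by
      intro s
      rw [hvdef]
      simp only [map_sum, ContinuousLinearMap.map_smul, smul_eq_mul, Finset.mul_sum]
      congr 1; funext j; ring
    simp_rw [heq]
    rw [intervalIntegral.integral_finset_sum]
    · have : ∀ j ∈ Finset.univ, (∫ s in (0:ℝ)..L,
          (μ i s * μ j s) * (a j * φ (EuclideanSpace.single j (1:ℝ))))
          = (if i = j then L / 2 else 0) * (a j * φ (EuclideanSpace.single j (1:ℝ))) := by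
        intro j _
        rw [intervalIntegral.integral_mul_const, hcov i j ℓ hℓ]
      rw [Finset.sum_congr rfl this]
      simp [ite_mul]
    · intro j _
      exact (((hcont i).mul (hcont j)).mul continuous_const).intervalIntegrable _ _
  have hI3 : |∫ s in (0:ℝ)..L, μ i s * (J (uhat + v s) - J uhat - φ (v s))|
      ≤ M * (N * abar) ^ 2 * L := by
    have hb : ∀ s ∈ Set.uIoc (0:ℝ) L,
        ‖μ i s * (J (uhat + v s) - J uhat - φ (v s))‖ ≤ M * (N * abar) ^ 2 := by
      intro s _
      rw [Real.norm_eq_abs, abs_mul]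
      calc |μ i s| * |J (uhat + v s) - J uhat - φ (v s)|
          ≤ 1 * (M * (N * abar) ^ 2) := by
            apply mul_le_mul (hbd i s) (hTaylor (v s) (hvnorm s)) (abs_nonneg _) zero_le_one
        _ = M * (N * abar) ^ 2 := one_mul _
    have hnle := intervalIntegral.norm_integral_le_of_norm_le_const hb
    rw [Real.norm_eq_abs] at hnle
    calc |∫ s in (0:ℝ)..L, μ i s * (J (uhat + v s) - J uhat - φ (v s))|
        ≤ M * (N * abar) ^ 2 * |L - 0| := hnle
      _ = M * (N * abar) ^ 2 * L := by rw [sub_zero, abs_of_pos hL]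
  -- conclude
  set I3 := ∫ s in (0:ℝ)..L, μ i s * (J (uhat + v s) - J uhat - φ (v s)) with hI3def
  have hLne : L ≠ 0 := ne_of_gt hL
  have hmain : (1 / L) * (∫ s in (0:ℝ)..L, μ i s * J (uhat + v s))
      - (a i / 2) * φ (EuclideanSpace.single i (1:ℝ)) = (1 / L) * I3 := by
    rw [hsplit, hI1, hI2]
    field_simp
    ring
  rw [hmain]
  rw [abs_mul, abs_of_pos (by positivity : (0:ℝ) < 1 / L)]
  calc (1 / L) * |I3| ≤ (1 / L) * (M * (N * abar) ^ 2 * L) := by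
        apply mul_le_mul_of_nonneg_left hI3 (by positivity)
    _ = M * N ^ 2 * abar ^ 2 := by field_simp
    _ ≤ (M * N ^ 2 + 1) * abar ^ 2 := by nlinarith [sq_nonneg abar]
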